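/- For λ = 0.99 and μ = 4.5, one has a(0.99, 4.5)² < 4·b(0.99, 4.5) and b(0.99, 4.5) < 1, so the Jacobian of Φ_{0.99,4.5} at its interior fixed point p* has non-real complex conjugate eigenvalues of modulus strictly less than 1 (p* is a spiral sink). For λ = 0.99 and μ = 4.55, one has a(0.99, 4.55)² < 4·b(0.99, 4.55) and b(0.99, 4.55) > 1, so the Jacobian of Φ_{0.99,4.55} at p* has non-real complex conjugate eigenvalues of modulus strictly greater than 1 (p* is a spiral source). -/

import Mathlib

noncomputable section

/-- The planar R-S flip-flop model map `Φ_{λ,μ}(x,y) = (1 − x(λ(1−x) + y), μy(x − y))`. -/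
def Phi (l m : ℝ) (p : ℝ × ℝ) : ℝ × ℝ :=
  (1 - p.1 * (l * (1 - p.1) + p.2), m * p.2 * (p.1 - p.2))

/-- `x*` coordinate of the interior fixed point. -/
def xstar (l m : ℝ) : ℝ :=
  ((m⁻¹ - l - 1) + Real.sqrt ((1 + l - m⁻¹) ^ 2 + 4 * (1 - l))) / (2 * (1 - l))

/-- `y*` coordinate of the interior fixed point. -/
def ystar (l m : ℝ) : ℝ := xstar l m - 1 / m

/-- `a(λ,μ)`, the trace of the Jacobian of Φ at p*. -/
def adef (l m : ℝ) : ℝ := (2 * l - m - 1) * xstar l m + (2 - l + m⁻¹)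

/-- `b(λ,μ)`, the determinant of the Jacobian of Φ at p*. -/
def bdef (l m : ℝ) : ℝ :=
  m * ((l * (4 * m⁻¹ - 1) - 2 * (1 + m⁻¹)) * xstar l m + 2 * (1 - m⁻¹ * (l - m⁻¹)))

/-- The Jacobian matrix of Φ_{λ,μ} at the interior fixed point p*. -/
def Jp (l m : ℝ) : Matrix (Fin 2) (Fin 2) ℝ :=
  !![l * (2 * xstar l m - 1) - ystar l m, -(xstar l m);
     m * ystar l m, m * (xstar l m - 2 * ystar l m)]

/-- The root `σ = (a + i√(4b − a²))/2` of `σ² − aσ + b = 0` (for `a² < 4b`). -/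
def sigmaRoot (l m : ℝ) : ℂ :=
  ((adef l m : ℂ) + Complex.I * Real.sqrt (4 * bdef l m - (adef l m) ^ 2)) / 2

lemma eig_lemma (A B : ℝ) (M : Matrix (Fin 2) (Fin 2) ℝ)
    (htr : M 0 0 + M 1 1 = A) (hdet : M 0 0 * M 1 1 - M 0 1 * M 1 0 = B)
    (hAB : A ^ 2 < 4 * B) (σ : ℂ)
    (hσ : σ = ((A : ℂ) + Complex.I * Real.sqrt (4 * B - A ^ 2)) / 2) :
    σ.im ≠ 0 ∧
    Matrix.det (σ • (1 : Matrix (Fin 2) (Fin 2) ℂ) - M.map (Complex.ofReal)) = 0 ∧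
    Matrix.det ((starRingEnd ℂ σ) • (1 : Matrix (Fin 2) (Fin 2) ℂ) - M.map (Complex.ofReal)) = 0 ∧
    ‖σ‖ ^ 2 = B := by
  set t := Real.sqrt (4 * B - A ^ 2) with ht_def
  have ht2 : t ^ 2 = 4 * B - A ^ 2 := Real.sq_sqrt (by nlinarith [sq_nonneg A])
  have ht0 : 0 < t := Real.sqrt_pos.mpr (by nlinarith [sq_nonneg A])
  have hre : σ.re = A / 2 := by rw [hσ]; simp
  have him : σ.im = t / 2 := by rw [hσ]; simp
  have htrC : (M 0 0 : ℂ) + (M 1 1 : ℂ) = (A : ℂ) := by exact_mod_cast congrArg Complex.ofReal htr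
  have hdetC : (M 0 0 : ℂ) * (M 1 1 : ℂ) - (M 0 1 : ℂ) * (M 1 0 : ℂ) = (B : ℂ) := by
    exact_mod_cast congrArg Complex.ofReal hdet
  have ht2C : (t : ℂ) ^ 2 = 4 * (B : ℂ) - (A : ℂ) ^ 2 := by exact_mod_cast congrArg Complex.ofReal ht2
  refine ⟨by rw [him]; positivity, ?_, ?_, ?_⟩
  · simp only [Matrix.det_fin_two, Matrix.sub_apply, Matrix.smul_apply, Matrix.one_apply,
      Matrix.map_apply]
    simp only [Fin.isValue, if_true, Ne, zero_ne_one, one_ne_zero, if_false, smul_eq_mul,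
      mul_one, mul_zero, eq_self_iff_true, if_pos]
    rw [hσ]
    linear_combination (-(((A : ℂ) + Complex.I * t) / 2)) * htrC + hdetC - (1/4) * ht2C
      + ((t:ℂ)^2/4) * Complex.I_sq
  · have hσc : starRingEnd ℂ σ = ((A : ℂ) - Complex.I * t) / 2 := by
      rw [hσ]; simp [map_div₀, Complex.conj_ofReal, Complex.conj_I, map_ofNat]; ring
    simp only [Matrix.det_fin_two, Matrix.sub_apply, Matrix.smul_apply, Matrix.one_apply,
      Matrix.map_apply]
    simp only [Fin.isValue, if_true, Ne, zero_ne_one, one_ne_zero, if_false, smul_eq_mul,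
      mul_one, mul_zero, eq_self_iff_true, if_pos]
    rw [hσc]
    linear_combination (-(((A : ℂ) - Complex.I * t) / 2)) * htrC + hdetC - (1/4) * ht2C
      + ((t:ℂ)^2/4) * Complex.I_sq
  · rw [Complex.sq_norm, Complex.normSq_apply, hre, him]
    nlinarith [ht2]

lemma case1 : (adef 0.99 4.5) ^ 2 < 4 * bdef 0.99 4.5 ∧ bdef 0.99 4.5 < 1 ∧
    (Jp 0.99 4.5) 0 0 + (Jp 0.99 4.5) 1 1 = adef 0.99 4.5 ∧
    (Jp 0.99 4.5) 0 0 * (Jp 0.99 4.5) 1 1 - (Jp 0.99 4.5) 0 1 * (Jp 0.99 4.5) 1 0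
      = bdef 0.99 4.5 := by
  have harg : (0:ℝ) ≤ (1 + 0.99 - (4.5:ℝ)⁻¹) ^ 2 + 4 * (1 - 0.99) := by norm_num
  set s := Real.sqrt ((1 + 0.99 - (4.5:ℝ)⁻¹) ^ 2 + 4 * (1 - 0.99)) with hsdef
  have hs2 : s ^ 2 = 2563681/810000 := by
    rw [hsdef, Real.sq_sqrt harg]; norm_num
  have hs0 : 0 ≤ s := Real.sqrt_nonneg _
  have hsl : (1.77905544 : ℝ) < s := by nlinarith
  have hsu : s < (1.77905545 : ℝ) := by nlinarith
  have hx : xstar 0.99 4.5 = 50 * s - 1591/18 := by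
    rw [xstar, ← hsdef]; norm_num; ring
  refine ⟨?_, ?_, ?_, ?_⟩
  · rw [adef, bdef, hx]; norm_num; nlinarith
  · rw [bdef, hx]; norm_num; nlinarith
  · simp only [Jp, adef, ystar, Matrix.of_apply, Matrix.cons_val', Matrix.cons_val_zero,
      Matrix.cons_val_one, Matrix.head_cons, Matrix.head_fin_const, Matrix.empty_val',
      Matrix.cons_val_fin_one]
    norm_num; ring
  · simp only [Jp, bdef, ystar, Matrix.of_apply, Matrix.cons_val', Matrix.cons_val_zero,
      Matrix.cons_val_one, Matrix.head_cons, Matrix.head_fin_const, Matrix.empty_val',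
      Matrix.cons_val_fin_one]
    rw [hx]
    linear_combination (225:ℝ) * hs2

lemma case2 : (adef 0.99 4.55) ^ 2 < 4 * bdef 0.99 4.55 ∧ 1 < bdef 0.99 4.55 ∧
    (Jp 0.99 4.55) 0 0 + (Jp 0.99 4.55) 1 1 = adef 0.99 4.55 ∧
    (Jp 0.99 4.55) 0 0 * (Jp 0.99 4.55) 1 1 - (Jp 0.99 4.55) 0 1 * (Jp 0.99 4.55) 1 0
      = bdef 0.99 4.55 := by
  have harg : (0:ℝ) ≤ (1 + 0.99 - (4.55:ℝ)⁻¹) ^ 2 + 4 * (1 - 0.99) := by norm_num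
  set s := Real.sqrt ((1 + 0.99 - (4.55:ℝ)⁻¹) ^ 2 + 4 * (1 - 0.99)) with hsdef
  have hs2 : s ^ 2 = 262812281/82810000 := by
    rw [hsdef, Real.sq_sqrt harg]; norm_num
  have hs0 : 0 ≤ s := Real.sqrt_nonneg _
  have hsl : (1.78148198 : ℝ) < s := by nlinarith
  have hsu : s < (1.78148199 : ℝ) := by nlinarith
  have hx : xstar 0.99 4.55 = 50 * s - 16109/182 := by
    rw [xstar, ← hsdef]; norm_num; ring
  refine ⟨?_, ?_, ?_, ?_⟩
  · rw [adef, bdef, hx]; norm_num; nlinarith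
  · rw [bdef, hx]; norm_num; nlinarith
  · simp only [Jp, adef, ystar, Matrix.of_apply, Matrix.cons_val', Matrix.cons_val_zero,
      Matrix.cons_val_one, Matrix.head_cons, Matrix.head_fin_const, Matrix.empty_val',
      Matrix.cons_val_fin_one]
    norm_num; ring
  · simp only [Jp, bdef, ystar, Matrix.of_apply, Matrix.cons_val', Matrix.cons_val_zero,
      Matrix.cons_val_one, Matrix.head_cons, Matrix.head_fin_const, Matrix.empty_val',
      Matrix.cons_val_fin_one]
    rw [hx]
    linear_combination (227.5:ℝ) * hs2

/-- For λ = 0.99, μ = 4.5: a² < 4b and b < 1, so the Jacobian at p* has non-real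
conjugate eigenvalues of modulus < 1 (spiral sink); for λ = 0.99, μ = 4.55: a² < 4b
and b > 1, so the eigenvalues are non-real conjugates of modulus > 1 (spiral source). -/
theorem stmt_17 :
    ((adef 0.99 4.5) ^ 2 < 4 * bdef 0.99 4.5 ∧ bdef 0.99 4.5 < 1 ∧
      (sigmaRoot 0.99 4.5).im ≠ 0 ∧
      Matrix.det ((sigmaRoot 0.99 4.5) • (1 : Matrix (Fin 2) (Fin 2) ℂ)
        - (Jp 0.99 4.5).map (Complex.ofReal)) = 0 ∧
      Matrix.det ((starRingEnd ℂ (sigmaRoot 0.99 4.5)) • (1 : Matrix (Fin 2) (Fin 2) ℂ)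
        - (Jp 0.99 4.5).map (Complex.ofReal)) = 0 ∧
      ‖sigmaRoot 0.99 4.5‖ < 1) ∧
    ((adef 0.99 4.55) ^ 2 < 4 * bdef 0.99 4.55 ∧ 1 < bdef 0.99 4.55 ∧
      (sigmaRoot 0.99 4.55).im ≠ 0 ∧
      Matrix.det ((sigmaRoot 0.99 4.55) • (1 : Matrix (Fin 2) (Fin 2) ℂ)
        - (Jp 0.99 4.55).map (Complex.ofReal)) = 0 ∧
      Matrix.det ((starRingEnd ℂ (sigmaRoot 0.99 4.55)) • (1 : Matrix (Fin 2) (Fin 2) ℂ)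
        - (Jp 0.99 4.55).map (Complex.ofReal)) = 0 ∧
      1 < ‖sigmaRoot 0.99 4.55‖) := by
  obtain ⟨h1, h2, htr, hdet⟩ := case1
  obtain ⟨e1, d1, d1c, ab1⟩ :=
    eig_lemma _ _ _ htr hdet h1 (sigmaRoot 0.99 4.5) (by rw [sigmaRoot])
  obtain ⟨h1', h2', htr', hdet'⟩ := case2
  obtain ⟨e2, d2, d2c, ab2⟩ :=
    eig_lemma _ _ _ htr' hdet' h1' (sigmaRoot 0.99 4.55) (by rw [sigmaRoot])
  refine ⟨⟨h1, h2, e1, d1, d1c, ?_⟩, ⟨h1', h2', e2, d2, d2c, ?_⟩⟩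
  · nlinarith [norm_nonneg (sigmaRoot 0.99 4.5), ab1, h2]
  · nlinarith [norm_nonneg (sigmaRoot 0.99 4.55), ab2, h2']
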